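/- Fix 1/2 < α < 1, κ₀ > 0, λ ∈ ℝ, and v₀ ∈ (0,1). With γ_σ(v, w, t) as defined below, there is a constant c depending only on α, κ₀ and v₀ such that for all cutoffs 0 < σ ≤ σ′ ≤ κ₀, all w, w′ ∈ ℝ³, every v ∈ ℝ³ with |v| ≤ v₀, and every t with 1 ≤ t ≤ (κ₀/σ′)^{1/α}: |γ_{σ′}(v, w′, t) − γ_σ(v, w, t)| ≤ c λ² ( σ′ t + |w − w′| · t^{2(1−α)} ). -/

import Mathlib

open scoped RealInnerProductSpace
open Real MeasureTheory

/-- The unit vector `e(θ,φ) = (sinθ cosφ, sinθ sinφ, cosθ)` on the sphere. -/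
noncomputable def sphDir (θ φ : ℝ) : EuclideanSpace ℝ (Fin 3) :=
  !₂[Real.sin θ * Real.cos φ, Real.sin θ * Real.sin φ, Real.cos θ]

lemma sphDir_norm (θ φ : ℝ) : ‖sphDir θ φ‖ = 1 := by
  rw [EuclideanSpace.norm_eq]
  have : ∑ i : Fin 3, ‖sphDir θ φ i‖ ^ 2 = 1 := by
    simp [sphDir, Fin.sum_univ_three, sq_abs]
    nlinarith [sin_sq_add_cos_sq θ, sin_sq_add_cos_sq φ, sq_nonneg (sin θ), sq_nonneg (cos θ)]
  rw [this, Real.sqrt_one]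

lemma abs_inner_sphDir (θ φ : ℝ) (w : EuclideanSpace ℝ (Fin 3)) :
    |⟪sphDir θ φ, w⟫| ≤ ‖w‖ := by
  have := abs_real_inner_le_norm (sphDir θ φ) w
  rwa [sphDir_norm, one_mul] at this

/-- Scalar form of `⟪sphDir θ φ, w⟫`. -/
noncomputable def inn (w : EuclideanSpace ℝ (Fin 3)) (θ φ : ℝ) : ℝ :=
  sin θ * cos φ * w 0 + sin θ * sin φ * w 1 + cos θ * w 2

lemma inner_sphDir_eq (θ φ : ℝ) (w : EuclideanSpace ℝ (Fin 3)) :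
    (⟪sphDir θ φ, w⟫ : ℝ) = inn w θ φ := by
  simp only [sphDir, inn, PiLp.inner_apply, RCLike.inner_apply, conj_trivial,
    Fin.sum_univ_three, Matrix.cons_val_zero, Matrix.cons_val_one, Matrix.head_cons,
    Matrix.cons_val_two, Matrix.tail_cons]
  ring

lemma abs_inn_le (w : EuclideanSpace ℝ (Fin 3)) (θ φ : ℝ) : |inn w θ φ| ≤ ‖w‖ := by
  rw [← inner_sphDir_eq]; exact abs_inner_sphDir θ φ w

lemma inn_sub (w w' : EuclideanSpace ℝ (Fin 3)) (θ φ : ℝ) :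
    inn w' θ φ - inn w θ φ = inn (w' - w) θ φ := by
  simp only [inn, PiLp.sub_apply]
  ring

lemma cont_inn (w : EuclideanSpace ℝ (Fin 3)) :
    Continuous fun p : ℝ × ℝ => inn w p.1 p.2 := by
  unfold inn; fun_prop

lemma abs_cos_sub_cos_le (a b : ℝ) : |cos a - cos b| ≤ |a - b| := by
  rw [Real.cos_sub_cos, abs_mul, abs_mul]
  have h1 : |sin ((a + b) / 2)| ≤ 1 := abs_sin_le_one _
  have h2 : |sin ((a - b) / 2)| ≤ |(a - b) / 2| := Real.abs_sin_le_abs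
  have h3 : |(a - b) / 2| = |a - b| / 2 := by rw [abs_div]; norm_num
  calc |(-2 : ℝ)| * |sin ((a + b) / 2)| * |sin ((a - b) / 2)|
      ≤ 2 * 1 * (|a - b| / 2) := by
        rw [abs_neg, abs_two]
        gcongr
        rw [← h3]; exact h2
    _ = |a - b| := by ring

/-- The angular integral, in scalar form. -/
noncomputable def angInt (v w : EuclideanSpace ℝ (Fin 3)) (r τ : ℝ) : ℝ :=
  ∫ φ in (0:ℝ)..(2 * Real.pi),
    ∫ θ in (0:ℝ)..Real.pi,
      Real.cos (r * τ * (inn w θ φ - 1)) / (1 - inn v θ φ) * Real.sin θ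


/-- The Dollard phase `γ_σ(v, w, t)` of the paper (with slow cutoff `σ_τ^S = κ₀ τ^{-α}`
and `t_σ = min(t, (κ₀/σ)^{1/α})`), with `w` in place of `∇E_{2,p,σ}` and `v` the cell
velocity. -/
noncomputable def gammaPhase (α κ₀ lam σ : ℝ) (v w : EuclideanSpace ℝ (Fin 3)) (t : ℝ) : ℝ :=
  -(lam ^ 2) * ∫ τ in (1:ℝ)..(min t ((κ₀ / σ) ^ (1 / α))),
      ∫ r in σ..(κ₀ * τ ^ (-α)),
        ∫ φ in (0:ℝ)..(2 * Real.pi),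
          ∫ θ in (0:ℝ)..Real.pi,
            Real.cos (r * τ * (⟪sphDir θ φ, w⟫ - 1)) / (1 - ⟪sphDir θ φ, v⟫) *
              Real.sin θ

lemma gammaPhase_eq (α κ₀ lam σ : ℝ) (v w : EuclideanSpace ℝ (Fin 3)) (t : ℝ) :
    gammaPhase α κ₀ lam σ v w t
    = -(lam ^ 2) * ∫ τ in (1:ℝ)..(min t ((κ₀ / σ) ^ (1 / α))),
        ∫ r in σ..(κ₀ * τ ^ (-α)), angInt v w r τ := by
  unfold gammaPhase angInt
  simp only [inner_sphDir_eq]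

section Cont

variable {v : EuclideanSpace ℝ (Fin 3)}

lemma cont_integrand' {X : Type*} [TopologicalSpace X]
    (hv : ∀ θ φ : ℝ, 1 - inn v θ φ ≠ 0) (w : EuclideanSpace ℝ (Fin 3))
    (R T TH PH : X → ℝ) (hR : Continuous R) (hT : Continuous T)
    (hTH : Continuous TH) (hPH : Continuous PH) :
    Continuous fun x : X =>
      Real.cos (R x * T x * (inn w (TH x) (PH x) - 1)) /
        (1 - inn v (TH x) (PH x)) * Real.sin (TH x) := by
  have hw : Continuous fun x : X => inn w (TH x) (PH x) := by unfold inn; fun_prop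
  have hvv : Continuous fun x : X => inn v (TH x) (PH x) := by unfold inn; fun_prop
  have hnum : Continuous fun x : X => Real.cos (R x * T x * (inn w (TH x) (PH x) - 1)) :=
    Real.continuous_cos.comp (((hR.mul hT)).mul (hw.sub continuous_const))
  exact (hnum.div (continuous_const.sub hvv) fun x => hv _ _).mul
    (Real.continuous_sin.comp hTH)

lemma cont_theta_integral {X : Type*} [TopologicalSpace X]
    (hv : ∀ θ φ : ℝ, 1 - inn v θ φ ≠ 0) (w : EuclideanSpace ℝ (Fin 3))
    (R T PH : X → ℝ) (hR : Continuous R) (hT : Continuous T) (hPH : Continuous PH) :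
    Continuous fun x : X =>
      ∫ θ in (0:ℝ)..Real.pi,
        Real.cos (R x * T x * (inn w θ (PH x) - 1)) /
          (1 - inn v θ (PH x)) * Real.sin θ := by
  have h : Continuous fun q : X × ℝ =>
      Real.cos (R q.1 * T q.1 * (inn w q.2 (PH q.1) - 1)) /
        (1 - inn v q.2 (PH q.1)) * Real.sin q.2 :=
    cont_integrand' (X := X × ℝ) hv w (fun q => R q.1) (fun q => T q.1) (fun q => q.2)
      (fun q => PH q.1) (hR.comp continuous_fst) (hT.comp continuous_fst)
      continuous_snd (hPH.comp continuous_fst)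
  exact intervalIntegral.continuous_parametric_intervalIntegral_of_continuous'
    (f := fun (x : X) (θ : ℝ) =>
      Real.cos (R x * T x * (inn w θ (PH x) - 1)) / (1 - inn v θ (PH x)) * Real.sin θ)
    h 0 Real.pi

lemma cont_angInt' {X : Type*} [TopologicalSpace X]
    (hv : ∀ θ φ : ℝ, 1 - inn v θ φ ≠ 0) (w : EuclideanSpace ℝ (Fin 3))
    (R T : X → ℝ) (hR : Continuous R) (hT : Continuous T) :
    Continuous fun x : X => angInt v w (R x) (T x) := by
  have h : Continuous fun q : X × ℝ =>
      ∫ θ in (0:ℝ)..Real.pi,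
        Real.cos (R q.1 * T q.1 * (inn w θ q.2 - 1)) / (1 - inn v θ q.2) * Real.sin θ :=
    cont_theta_integral (X := X × ℝ) hv w (fun q => R q.1) (fun q => T q.1) (fun q => q.2)
      (hR.comp continuous_fst) (hT.comp continuous_fst) continuous_snd
  exact intervalIntegral.continuous_parametric_intervalIntegral_of_continuous'
    (f := fun (x : X) (φ : ℝ) =>
      ∫ θ in (0:ℝ)..Real.pi,
        Real.cos (R x * T x * (inn w θ φ - 1)) / (1 - inn v θ φ) * Real.sin θ)
    h 0 (2 * Real.pi)

end Cont

section Bounds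

variable {v₀ : ℝ} {v : EuclideanSpace ℝ (Fin 3)}

lemma denom_lb (hv : ‖v‖ ≤ v₀) (θ φ : ℝ) : 1 - v₀ ≤ 1 - inn v θ φ := by
  have h := (abs_le.mp ((abs_inn_le v θ φ).trans hv)).2
  linarith

lemma denom_ne (hv₀' : v₀ < 1) (hv : ‖v‖ ≤ v₀) : ∀ θ φ : ℝ, 1 - inn v θ φ ≠ 0 := by
  intro θ φ
  have := denom_lb hv θ φ
  have h0 : (0:ℝ) < 1 - v₀ := by linarith
  exact ne_of_gt (lt_of_lt_of_le h0 this)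

lemma core_bound (hv₀' : v₀ < 1) (hv : ‖v‖ ≤ v₀) {n M : ℝ} (hn : |n| ≤ M) (θ φ : ℝ) :
    |n / (1 - inn v θ φ) * Real.sin θ| ≤ M / (1 - v₀) := by
  have h0 : (0:ℝ) < 1 - v₀ := by linarith
  have hd := denom_lb hv θ φ
  have hd' : 1 - v₀ ≤ |1 - inn v θ φ| := hd.trans (le_abs_self _)
  rw [abs_mul, abs_div]
  calc |n| / |1 - inn v θ φ| * |Real.sin θ| ≤ M / (1 - v₀) * 1 := by
        have hM : 0 ≤ M := (abs_nonneg n).trans hn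
        exact mul_le_mul (div_le_div₀ hM hn h0 hd') (abs_sin_le_one θ) (abs_nonneg _)
          (by positivity)
    _ = M / (1 - v₀) := mul_one _

lemma theta_integrable (hv₀' : v₀ < 1) (hv : ‖v‖ ≤ v₀) (w : EuclideanSpace ℝ (Fin 3))
    (r τ φ : ℝ) (a b : ℝ) :
    IntervalIntegrable (fun θ : ℝ =>
      Real.cos (r * τ * (inn w θ φ - 1)) / (1 - inn v θ φ) * Real.sin θ) volume a b := by
  apply Continuous.intervalIntegrable
  exact cont_integrand' (X := ℝ) (denom_ne hv₀' hv) w (fun _ => r) (fun _ => τ) id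
    (fun _ => φ) continuous_const continuous_const continuous_id continuous_const

lemma theta_int_abs_le (hv₀' : v₀ < 1) (hv : ‖v‖ ≤ v₀) (w : EuclideanSpace ℝ (Fin 3))
    (r τ φ : ℝ) :
    |∫ θ in (0:ℝ)..Real.pi,
        Real.cos (r * τ * (inn w θ φ - 1)) / (1 - inn v θ φ) * Real.sin θ|
      ≤ 1 / (1 - v₀) * Real.pi := by
  have h := intervalIntegral.norm_integral_le_of_norm_le_const (C := 1 / (1 - v₀))
    (a := (0:ℝ)) (b := Real.pi)
    (f := fun θ => Real.cos (r * τ * (inn w θ φ - 1)) / (1 - inn v θ φ) * Real.sin θ)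
    (fun θ _ => by
      rw [Real.norm_eq_abs]
      have := core_bound hv₀' hv (abs_cos_le_one (r * τ * (inn w θ φ - 1))) θ φ
      simpa using this)
  rw [Real.norm_eq_abs] at h
  calc |∫ θ in (0:ℝ)..Real.pi, _| ≤ 1 / (1 - v₀) * |Real.pi - 0| := h
    _ = 1 / (1 - v₀) * Real.pi := by rw [sub_zero, abs_of_nonneg Real.pi_nonneg]

lemma angInt_abs_le (hv₀' : v₀ < 1) (hv : ‖v‖ ≤ v₀) (w : EuclideanSpace ℝ (Fin 3))
    (r τ : ℝ) : |angInt v w r τ| ≤ 2 * Real.pi ^ 2 / (1 - v₀) := by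
  have h := intervalIntegral.norm_integral_le_of_norm_le_const
    (C := 1 / (1 - v₀) * Real.pi) (a := (0:ℝ)) (b := 2 * Real.pi)
    (f := fun φ => ∫ θ in (0:ℝ)..Real.pi,
      Real.cos (r * τ * (inn w θ φ - 1)) / (1 - inn v θ φ) * Real.sin θ)
    (fun φ _ => by rw [Real.norm_eq_abs]; exact theta_int_abs_le hv₀' hv w r τ φ)
  rw [Real.norm_eq_abs] at h
  have h2 : 1 / (1 - v₀) * Real.pi * |2 * Real.pi - 0| = 2 * Real.pi ^ 2 / (1 - v₀) := by
    rw [sub_zero, abs_of_nonneg (by positivity : (0:ℝ) ≤ 2 * Real.pi)]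
    ring
  rw [h2] at h
  exact h

lemma phi_integrable (hv₀' : v₀ < 1) (hv : ‖v‖ ≤ v₀) (w : EuclideanSpace ℝ (Fin 3))
    (r τ : ℝ) (a b : ℝ) :
    IntervalIntegrable (fun φ : ℝ => ∫ θ in (0:ℝ)..Real.pi,
      Real.cos (r * τ * (inn w θ φ - 1)) / (1 - inn v θ φ) * Real.sin θ) volume a b := by
  apply Continuous.intervalIntegrable
  exact cont_theta_integral (X := ℝ) (denom_ne hv₀' hv) w (fun _ => r) (fun _ => τ) id
    continuous_const continuous_const continuous_id

lemma integrand_sub_bound (hv₀' : v₀ < 1) (hv : ‖v‖ ≤ v₀)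
    (w w' : EuclideanSpace ℝ (Fin 3)) {r τ : ℝ} (hr : 0 ≤ r) (hτ : 0 ≤ τ) (θ φ : ℝ) :
    |Real.cos (r * τ * (inn w' θ φ - 1)) / (1 - inn v θ φ) * Real.sin θ -
      Real.cos (r * τ * (inn w θ φ - 1)) / (1 - inn v θ φ) * Real.sin θ|
      ≤ r * τ * ‖w' - w‖ / (1 - v₀) := by
  have hsub : Real.cos (r * τ * (inn w' θ φ - 1)) / (1 - inn v θ φ) * Real.sin θ -
      Real.cos (r * τ * (inn w θ φ - 1)) / (1 - inn v θ φ) * Real.sin θ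
      = (Real.cos (r * τ * (inn w' θ φ - 1)) - Real.cos (r * τ * (inn w θ φ - 1))) /
          (1 - inn v θ φ) * Real.sin θ := by ring
  rw [hsub]
  apply core_bound hv₀' hv _ θ φ
  calc |Real.cos (r * τ * (inn w' θ φ - 1)) - Real.cos (r * τ * (inn w θ φ - 1))|
      ≤ |r * τ * (inn w' θ φ - 1) - r * τ * (inn w θ φ - 1)| := _root_.abs_cos_sub_cos_le _ _
    _ = |r * τ| * |inn (w' - w) θ φ| := by
        rw [← abs_mul]
        congr 1
        rw [← inn_sub]
        ring
    _ ≤ r * τ * ‖w' - w‖ := by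
        rw [abs_of_nonneg (mul_nonneg hr hτ)]
        exact mul_le_mul_of_nonneg_left (abs_inn_le _ θ φ) (mul_nonneg hr hτ)

lemma angInt_sub_abs_le (hv₀' : v₀ < 1) (hv : ‖v‖ ≤ v₀)
    (w w' : EuclideanSpace ℝ (Fin 3)) {r τ : ℝ} (hr : 0 ≤ r) (hτ : 0 ≤ τ) :
    |angInt v w' r τ - angInt v w r τ|
      ≤ 2 * Real.pi ^ 2 / (1 - v₀) * (r * τ * ‖w' - w‖) := by
  have houter : angInt v w' r τ - angInt v w r τ
      = ∫ φ in (0:ℝ)..(2 * Real.pi),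
          ((∫ θ in (0:ℝ)..Real.pi,
            Real.cos (r * τ * (inn w' θ φ - 1)) / (1 - inn v θ φ) * Real.sin θ) -
          ∫ θ in (0:ℝ)..Real.pi,
            Real.cos (r * τ * (inn w θ φ - 1)) / (1 - inn v θ φ) * Real.sin θ) := by
    rw [intervalIntegral.integral_sub (phi_integrable hv₀' hv w' r τ _ _)
      (phi_integrable hv₀' hv w r τ _ _)]
    rfl
  rw [houter]
  have h := intervalIntegral.norm_integral_le_of_norm_le_const
    (C := r * τ * ‖w' - w‖ / (1 - v₀) * Real.pi) (a := (0:ℝ)) (b := 2 * Real.pi)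
    (f := fun φ =>
      (∫ θ in (0:ℝ)..Real.pi,
        Real.cos (r * τ * (inn w' θ φ - 1)) / (1 - inn v θ φ) * Real.sin θ) -
      ∫ θ in (0:ℝ)..Real.pi,
        Real.cos (r * τ * (inn w θ φ - 1)) / (1 - inn v θ φ) * Real.sin θ)
    (fun φ _ => by
      beta_reduce
      rw [Real.norm_eq_abs,
        ← intervalIntegral.integral_sub (theta_integrable hv₀' hv w' r τ φ _ _)
          (theta_integrable hv₀' hv w r τ φ _ _)]
      have h2 := intervalIntegral.norm_integral_le_of_norm_le_const
        (C := r * τ * ‖w' - w‖ / (1 - v₀)) (a := (0:ℝ)) (b := Real.pi)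
        (f := fun θ =>
          Real.cos (r * τ * (inn w' θ φ - 1)) / (1 - inn v θ φ) * Real.sin θ -
          Real.cos (r * τ * (inn w θ φ - 1)) / (1 - inn v θ φ) * Real.sin θ)
        (fun θ _ => by
          rw [Real.norm_eq_abs]
          exact integrand_sub_bound hv₀' hv w w' hr hτ θ φ)
      rw [Real.norm_eq_abs] at h2
      calc |∫ θ in (0:ℝ)..Real.pi, _| ≤ r * τ * ‖w' - w‖ / (1 - v₀) * |Real.pi - 0| := h2
        _ = r * τ * ‖w' - w‖ / (1 - v₀) * Real.pi := by
            rw [sub_zero, abs_of_nonneg Real.pi_nonneg])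
  rw [Real.norm_eq_abs] at h
  have h2 : r * τ * ‖w' - w‖ / (1 - v₀) * Real.pi * |2 * Real.pi - 0|
      = 2 * Real.pi ^ 2 / (1 - v₀) * (r * τ * ‖w' - w‖) := by
    rw [sub_zero, abs_of_nonneg (by positivity : (0:ℝ) ≤ 2 * Real.pi)]
    ring
  rw [h2] at h
  exact h

lemma angInt_r_integrable (hv₀' : v₀ < 1) (hv : ‖v‖ ≤ v₀) (w : EuclideanSpace ℝ (Fin 3))
    (τ : ℝ) (a b : ℝ) :
    IntervalIntegrable (fun r : ℝ => angInt v w r τ) volume a b :=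
  (cont_angInt' (X := ℝ) (denom_ne hv₀' hv) w id (fun _ => τ)
    continuous_id continuous_const).intervalIntegrable a b

end Bounds


set_option maxHeartbeats 1000000 in
/-- Estimate (J.3) of Lemma J.5 ('phases-shift-cut-off'): for cutoffs `0 < σ ≤ σ' ≤ κ₀`
and `1 ≤ t ≤ (κ₀/σ')^{1/α}`,
`|γ_{σ'}(v, w', t) - γ_σ(v, w, t)| ≤ c λ² (σ' t + |w - w'| t^{2(1-α)})`, with `c`
depending only on `α`, `κ₀`, `v₀`. -/
theorem gammaPhase_cutoff_shift (α κ₀ v₀ : ℝ) (hα₁ : 1 / 2 < α) (hα₂ : α < 1)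
    (hκ₀ : 0 < κ₀) (hv₀ : 0 < v₀) (hv₀' : v₀ < 1) :
    ∃ c : ℝ, 0 < c ∧
      ∀ (lam σ σ' t : ℝ) (v w w' : EuclideanSpace ℝ (Fin 3)),
        0 < σ → σ ≤ σ' → σ' ≤ κ₀ → ‖v‖ ≤ v₀ → 1 ≤ t → t ≤ (κ₀ / σ') ^ (1 / α) →
        |gammaPhase α κ₀ lam σ' v w' t - gammaPhase α κ₀ lam σ v w t|
          ≤ c * lam ^ 2 * (σ' * t + ‖w - w'‖ * t ^ (2 * (1 - α))) := by
  have h1v : (0:ℝ) < 1 - v₀ := by linarith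
  have hπ := Real.pi_pos
  have h2α : (0:ℝ) < 2 - 2 * α := by linarith
  have hα0 : (0:ℝ) < α := by linarith
  set C₀ : ℝ := 2 * Real.pi ^ 2 / (1 - v₀) with hC₀def
  have hC₀ : 0 < C₀ := by positivity
  refine ⟨C₀ * (1 + κ₀ ^ 2 / (2 * (2 - 2 * α))), by positivity, ?_⟩
  set c : ℝ := C₀ * (1 + κ₀ ^ 2 / (2 * (2 - 2 * α))) with hcdef
  intro lam σ σ' t v w w' hσ hσσ' hσ'κ hv ht1 ht2
  have hσ' : 0 < σ' := lt_of_lt_of_le hσ hσσ'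
  have hden := denom_ne hv₀' hv
  set D : ℝ := ‖w' - w‖ with hDdef
  have hD0 : 0 ≤ D := norm_nonneg _
  -- the min's collapse
  have hmono : (κ₀ / σ') ^ (1 / α) ≤ (κ₀ / σ) ^ (1 / α) := by
    apply Real.rpow_le_rpow (by positivity) _ (by positivity)
    gcongr
  have hmin' : min t ((κ₀ / σ') ^ (1 / α)) = t := min_eq_left ht2
  have hmin : min t ((κ₀ / σ) ^ (1 / α)) = t := min_eq_left (ht2.trans hmono)
  rw [gammaPhase_eq, gammaPhase_eq, hmin', hmin]
  -- integrability of the two τ-integrands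
  have hb : Continuous fun τ : ℝ => κ₀ * (max τ 1 : ℝ) ^ (-α) := by
    have hmax : Continuous fun τ : ℝ => (max τ 1 : ℝ) := continuous_id.max continuous_const
    have hlog : Continuous fun τ : ℝ => Real.log (max τ 1) := by
      rw [continuous_iff_continuousAt]
      intro τ
      exact (Real.continuousAt_log (by positivity)).comp hmax.continuousAt
    have h2 : (fun τ : ℝ => (max τ 1 : ℝ) ^ (-α))
        = fun τ : ℝ => Real.exp ((-α) * Real.log (max τ 1)) := by
      funext τ
      rw [Real.rpow_def_of_pos (lt_of_lt_of_le one_pos (le_max_right τ 1))]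
      ring_nf
    have h3 : Continuous fun τ : ℝ => (max τ 1 : ℝ) ^ (-α) := by
      rw [h2]
      exact Real.continuous_exp.comp (continuous_const.mul hlog)
    exact continuous_const.mul h3
  have hτint : ∀ (u : EuclideanSpace ℝ (Fin 3)) (s : ℝ), IntervalIntegrable
      (fun τ : ℝ => ∫ r in s..(κ₀ * τ ^ (-α)), angInt v u r τ) volume 1 t := by
    intro u s
    have hFc : Continuous fun τ : ℝ =>
        ∫ r in s..(κ₀ * (max τ 1 : ℝ) ^ (-α)), angInt v u r τ :=
      intervalIntegral.continuous_parametric_intervalIntegral_of_continuous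
        (f := fun τ r => angInt v u r τ)
        (cont_angInt' (X := ℝ × ℝ) hden u (fun q => q.2) (fun q => q.1)
          continuous_snd continuous_fst) hb
    apply ContinuousOn.intervalIntegrable
    apply hFc.continuousOn.congr
    intro τ hτ
    rw [Set.uIcc_of_le ht1] at hτ
    simp only
    rw [max_eq_left hτ.1]
  -- pull out -(lam^2) and combine the integrals
  have hfactor : -(lam ^ 2) * (∫ τ in (1:ℝ)..t, ∫ r in σ'..(κ₀ * τ ^ (-α)), angInt v w' r τ)
      - -(lam ^ 2) * (∫ τ in (1:ℝ)..t, ∫ r in σ..(κ₀ * τ ^ (-α)), angInt v w r τ)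
      = -(lam ^ 2) * ∫ τ in (1:ℝ)..t,
          ((∫ r in σ'..(κ₀ * τ ^ (-α)), angInt v w' r τ)
            - ∫ r in σ..(κ₀ * τ ^ (-α)), angInt v w r τ) := by
    rw [intervalIntegral.integral_sub (hτint w' σ') (hτint w σ)]
    ring
  rw [hfactor, abs_mul, abs_neg, abs_pow, sq_abs]
  -- the majorant
  set g : ℝ → ℝ := fun τ => C₀ * D * (κ₀ ^ 2 / 2) * τ ^ (1 - 2 * α) + C₀ * (σ' - σ)
    with hgdef
  have hgint : IntervalIntegrable g volume 1 t := by
    apply ContinuousOn.intervalIntegrable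
    apply ContinuousOn.add _ continuousOn_const
    apply ContinuousOn.mul continuousOn_const
    apply ContinuousOn.rpow_const continuousOn_id
    intro x hx
    rw [Set.uIcc_of_le ht1] at hx
    exact Or.inl (ne_of_gt (lt_of_lt_of_le one_pos hx.1))
  have hrpowint : IntervalIntegrable (fun τ : ℝ => τ ^ (1 - 2 * α)) volume 1 t := by
    apply ContinuousOn.intervalIntegrable
    apply ContinuousOn.rpow_const continuousOn_id
    intro x hx
    rw [Set.uIcc_of_le ht1] at hx
    exact Or.inl (ne_of_gt (lt_of_lt_of_le one_pos hx.1))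
  -- pointwise bound
  have hae : ∀ τ ∈ Set.uIoc (1:ℝ) t,
      ‖(∫ r in σ'..(κ₀ * τ ^ (-α)), angInt v w' r τ)
        - ∫ r in σ..(κ₀ * τ ^ (-α)), angInt v w r τ‖ ≤ g τ := by
    intro τ hτ
    rw [Set.uIoc_of_le ht1] at hτ
    obtain ⟨hτ1, hτt⟩ := hτ
    have hτ0 : (0:ℝ) < τ := lt_trans one_pos hτ1
    set K : ℝ := κ₀ * τ ^ (-α) with hKdef
    have hτα : (0:ℝ) < τ ^ α := Real.rpow_pos_of_pos hτ0 α
    have hταle : τ ^ α ≤ κ₀ / σ' := by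
      have h := Real.rpow_le_rpow hτ0.le (hτt.trans ht2) hα0.le
      rwa [← Real.rpow_mul (by positivity), one_div, inv_mul_cancel₀ (ne_of_gt hα0),
        Real.rpow_one] at h
    have hσ'K : σ' ≤ K := by
      rw [hKdef, Real.rpow_neg hτ0.le, ← div_eq_mul_inv]
      rw [le_div_iff₀ hτα]
      calc σ' * τ ^ α ≤ σ' * (κ₀ / σ') := by gcongr
        _ = κ₀ := by field_simp
    have h0K : 0 < K := lt_of_lt_of_le hσ' hσ'K
    -- split G
    have hsplit : (∫ r in σ..K, angInt v w r τ)
        = (∫ r in σ..σ', angInt v w r τ) + ∫ r in σ'..K, angInt v w r τ :=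
      (intervalIntegral.integral_add_adjacent_intervals
        (angInt_r_integrable hv₀' hv w τ σ σ') (angInt_r_integrable hv₀' hv w τ σ' K)).symm
    have hdiff : (∫ r in σ'..K, angInt v w' r τ) - (∫ r in σ'..K, angInt v w r τ)
        = ∫ r in σ'..K, (angInt v w' r τ - angInt v w r τ) :=
      (intervalIntegral.integral_sub (angInt_r_integrable hv₀' hv w' τ σ' K)
        (angInt_r_integrable hv₀' hv w τ σ' K)).symm
    rw [Real.norm_eq_abs, hsplit]
    have htri : |(∫ r in σ'..K, angInt v w' r τ)
        - ((∫ r in σ..σ', angInt v w r τ) + ∫ r in σ'..K, angInt v w r τ)|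
        ≤ |(∫ r in σ'..K, (angInt v w' r τ - angInt v w r τ))|
          + |∫ r in σ..σ', angInt v w r τ| := by
      rw [← hdiff]
      have : (∫ r in σ'..K, angInt v w' r τ)
          - ((∫ r in σ..σ', angInt v w r τ) + ∫ r in σ'..K, angInt v w r τ)
          = ((∫ r in σ'..K, angInt v w' r τ) - ∫ r in σ'..K, angInt v w r τ)
            + -(∫ r in σ..σ', angInt v w r τ) := by ring
      rw [this]
      exact (abs_add_le _ _).trans (by rw [abs_neg])
    apply htri.trans
    -- term 2
    have hterm2 : |∫ r in σ..σ', angInt v w r τ| ≤ C₀ * (σ' - σ) := by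
      have h := intervalIntegral.norm_integral_le_of_norm_le_const (C := C₀)
        (a := σ) (b := σ') (f := fun r => angInt v w r τ)
        (fun r _ => by rw [Real.norm_eq_abs]; exact angInt_abs_le hv₀' hv w r τ)
      rw [Real.norm_eq_abs, abs_of_nonneg (by linarith : (0:ℝ) ≤ σ' - σ)] at h
      exact h
    -- term 1
    have hterm1 : |∫ r in σ'..K, (angInt v w' r τ - angInt v w r τ)|
        ≤ C₀ * D * (κ₀ ^ 2 / 2) * τ ^ (1 - 2 * α) := by
      have hbnd : ∀ r ∈ Set.uIoc σ' K,
          ‖angInt v w' r τ - angInt v w r τ‖ ≤ C₀ * τ * D * r := by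
        intro r hr
        rw [Set.uIoc_of_le hσ'K] at hr
        have hr0 : 0 ≤ r := le_of_lt (lt_of_le_of_lt hσ'.le hr.1)
        rw [Real.norm_eq_abs]
        calc |angInt v w' r τ - angInt v w r τ| ≤ C₀ * (r * τ * D) :=
              angInt_sub_abs_le hv₀' hv w w' hr0 hτ0.le
          _ = C₀ * τ * D * r := by ring
      have hint : IntervalIntegrable (fun r : ℝ => C₀ * τ * D * r) volume σ' K :=
        (continuous_const.mul continuous_id).intervalIntegrable σ' K
      have h := intervalIntegral.norm_integral_le_abs_of_norm_le
        (f := fun r => angInt v w' r τ - angInt v w r τ)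
        (g := fun r : ℝ => C₀ * τ * D * r) (a := σ') (b := K) (μ := volume)
        ((MeasureTheory.ae_restrict_iff' measurableSet_uIoc).mpr
          (Filter.Eventually.of_forall hbnd)) hint
      rw [Real.norm_eq_abs] at h
      apply h.trans
      rw [intervalIntegral.integral_const_mul, integral_id]
      have hpow : τ * (κ₀ * τ ^ (-α)) ^ 2 = κ₀ ^ 2 * τ ^ (1 - 2 * α) := by
        have h1 : (τ ^ (-α)) ^ 2 = τ ^ ((-α) * 2) := by
          rw [← Real.rpow_natCast (τ ^ (-α)) 2, ← Real.rpow_mul hτ0.le]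
          norm_num
        calc τ * (κ₀ * τ ^ (-α)) ^ 2 = κ₀ ^ 2 * (τ ^ (1:ℝ) * τ ^ ((-α) * 2)) := by
              rw [mul_pow, h1, Real.rpow_one]; ring
          _ = κ₀ ^ 2 * τ ^ (1 + (-α) * 2) := by rw [← Real.rpow_add hτ0]
          _ = κ₀ ^ 2 * τ ^ (1 - 2 * α) := by rw [show (1:ℝ) + (-α) * 2 = 1 - 2 * α by ring]
      have hK2 : τ * K ^ 2 = κ₀ ^ 2 * τ ^ (1 - 2 * α) := hpow
      have hsqK : σ' ^ 2 ≤ K ^ 2 := pow_le_pow_left₀ hσ'.le hσ'K 2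
      have hnn : (0:ℝ) ≤ C₀ * τ * D * ((K ^ 2 - σ' ^ 2) / 2) := by
        have h2 : (0:ℝ) ≤ (K ^ 2 - σ' ^ 2) / 2 := by linarith
        positivity
      rw [abs_of_nonneg hnn]
      have h1 : C₀ * τ * D * ((K ^ 2 - σ' ^ 2) / 2) ≤ C₀ * τ * D * (K ^ 2 / 2) := by
        apply mul_le_mul_of_nonneg_left (by linarith [sq_nonneg σ']) (by positivity)
      have h2 : C₀ * τ * D * (K ^ 2 / 2) = C₀ * D * (κ₀ ^ 2 / 2) * τ ^ (1 - 2 * α) := by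
        calc C₀ * τ * D * (K ^ 2 / 2) = C₀ * D / 2 * (τ * K ^ 2) := by ring
          _ = C₀ * D / 2 * (κ₀ ^ 2 * τ ^ (1 - 2 * α)) := by rw [hK2]
          _ = C₀ * D * (κ₀ ^ 2 / 2) * τ ^ (1 - 2 * α) := by ring
      exact h1.trans_eq h2
    calc |∫ r in σ'..K, (angInt v w' r τ - angInt v w r τ)| + |∫ r in σ..σ', angInt v w r τ|
        ≤ C₀ * D * (κ₀ ^ 2 / 2) * τ ^ (1 - 2 * α) + C₀ * (σ' - σ) := add_le_add hterm1 hterm2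
      _ = g τ := rfl
  -- assemble
  have hmain : |∫ τ in (1:ℝ)..t,
      ((∫ r in σ'..(κ₀ * τ ^ (-α)), angInt v w' r τ)
        - ∫ r in σ..(κ₀ * τ ^ (-α)), angInt v w r τ)| ≤ |∫ τ in (1:ℝ)..t, g τ| := by
    have h := intervalIntegral.norm_integral_le_abs_of_norm_le (μ := volume) (a := 1) (b := t)
      (f := fun τ => (∫ r in σ'..(κ₀ * τ ^ (-α)), angInt v w' r τ)
        - ∫ r in σ..(κ₀ * τ ^ (-α)), angInt v w r τ)
      (g := g)
      ((MeasureTheory.ae_restrict_iff' measurableSet_uIoc).mpr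
        (Filter.Eventually.of_forall hae)) hgint
    rwa [Real.norm_eq_abs] at h
  have hgval : ∫ τ in (1:ℝ)..t, g τ
      = C₀ * D * (κ₀ ^ 2 / 2) * ((t ^ (2 - 2 * α) - 1) / (2 - 2 * α))
        + C₀ * (σ' - σ) * (t - 1) := by
    rw [hgdef]
    rw [intervalIntegral.integral_add (hrpowint.const_mul _) intervalIntegrable_const]
    rw [intervalIntegral.integral_const_mul, integral_rpow
      (Or.inl (by linarith : (-1:ℝ) < 1 - 2 * α)), intervalIntegral.integral_const]
    rw [Real.one_rpow, smul_eq_mul, show (1:ℝ) - 2 * α + 1 = 2 - 2 * α by ring]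
    ring
  have h1le : (1:ℝ) ≤ t ^ (2 - 2 * α) := Real.one_le_rpow ht1 (by linarith)
  have hub : |∫ τ in (1:ℝ)..t, g τ| ≤ c * (σ' * t + D * t ^ (2 - 2 * α)) := by
    rw [hgval]
    have hnn1 : (0:ℝ) ≤ C₀ * D * (κ₀ ^ 2 / 2) * ((t ^ (2 - 2 * α) - 1) / (2 - 2 * α)) := by
      have : (0:ℝ) ≤ (t ^ (2 - 2 * α) - 1) / (2 - 2 * α) := by
        apply div_nonneg (by linarith) h2α.le
      positivity
    have hnn2 : (0:ℝ) ≤ C₀ * (σ' - σ) * (t - 1) := by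
      apply mul_nonneg (mul_nonneg hC₀.le (by linarith)) (by linarith)
    rw [abs_of_nonneg (by linarith)]
    have e1 : C₀ * D * (κ₀ ^ 2 / 2) * ((t ^ (2 - 2 * α) - 1) / (2 - 2 * α))
        ≤ C₀ * (κ₀ ^ 2 / (2 * (2 - 2 * α))) * (D * t ^ (2 - 2 * α)) := by
      have h' : (t ^ (2 - 2 * α) - 1) / (2 - 2 * α) ≤ t ^ (2 - 2 * α) / (2 - 2 * α) := by
        gcongr
        linarith
      calc C₀ * D * (κ₀ ^ 2 / 2) * ((t ^ (2 - 2 * α) - 1) / (2 - 2 * α))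
          ≤ C₀ * D * (κ₀ ^ 2 / 2) * (t ^ (2 - 2 * α) / (2 - 2 * α)) :=
            mul_le_mul_of_nonneg_left h' (by positivity)
        _ = C₀ * (κ₀ ^ 2 / (2 * (2 - 2 * α))) * (D * t ^ (2 - 2 * α)) := by
            field_simp
    have e2 : C₀ * (σ' - σ) * (t - 1) ≤ C₀ * (σ' * t) := by
      have h'' : (σ' - σ) * (t - 1) ≤ σ' * t :=
        mul_le_mul (by linarith) (by linarith) (by linarith) hσ'.le
      calc C₀ * (σ' - σ) * (t - 1) = C₀ * ((σ' - σ) * (t - 1)) := by ring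
        _ ≤ C₀ * (σ' * t) := mul_le_mul_of_nonneg_left h'' hC₀.le
    calc C₀ * D * (κ₀ ^ 2 / 2) * ((t ^ (2 - 2 * α) - 1) / (2 - 2 * α))
          + C₀ * (σ' - σ) * (t - 1)
        ≤ C₀ * (κ₀ ^ 2 / (2 * (2 - 2 * α))) * (D * t ^ (2 - 2 * α)) + C₀ * (σ' * t) :=
          add_le_add e1 e2
      _ ≤ c * (σ' * t + D * t ^ (2 - 2 * α)) := by
          rw [hcdef]
          have hst : (0:ℝ) ≤ σ' * t := by positivity
          have hdt : (0:ℝ) ≤ D * t ^ (2 - 2 * α) := by positivity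
          have hk : (0:ℝ) ≤ κ₀ ^ 2 / (2 * (2 - 2 * α)) := by positivity
          nlinarith [mul_nonneg (mul_nonneg hC₀.le hk) hst, mul_nonneg hC₀.le hdt]
  rw [show ‖w - w'‖ = D from by rw [hDdef, norm_sub_rev],
    show t ^ (2 * (1 - α)) = t ^ (2 - 2 * α) from by rw [show 2 * (1 - α) = 2 - 2 * α by ring]]
  calc lam ^ 2 * |∫ τ in (1:ℝ)..t,
        ((∫ r in σ'..(κ₀ * τ ^ (-α)), angInt v w' r τ)
          - ∫ r in σ..(κ₀ * τ ^ (-α)), angInt v w r τ)|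
      ≤ lam ^ 2 * |∫ τ in (1:ℝ)..t, g τ| := mul_le_mul_of_nonneg_left hmain (sq_nonneg lam)
    _ ≤ lam ^ 2 * (c * (σ' * t + D * t ^ (2 - 2 * α))) :=
        mul_le_mul_of_nonneg_left hub (sq_nonneg lam)
    _ = c * lam ^ 2 * (σ' * t + D * t ^ (2 - 2 * α)) := by ring
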